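/- Let ψ be a critical branching mechanism, λ > 0, η = ψ^{-1}(λ), and θ_λ = inf{θ : ψ_θ(η) ≥ 0} (so ψ(θ_λ + η) = ψ(θ_λ), i.e. θ̄_λ - θ_λ = η, assuming θ_λ belongs to the domain). Then the function f_λ(r) = (1/η)(1 - ψ'(r)/ψ'(r̄)) for r ∈ (θ_λ, 0), where r̄ = ψ^{-1}(ψ(r)) ≥ 0 satisfies ψ(r̄) = ψ(r), is a probability density: f_λ ≥ 0 on (θ_λ, 0) and ∫_{θ_λ}^0 f_λ(r) dr = 1. -/

import Mathlib

open Set MeasureTheory Filter Topology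

/-- for a critical branching mechanism, the function
`f_λ(r) = (1/η)(1 - ψ'(r)/ψ'(r̄))` on `(θ_λ, 0)` is a probability density. -/
theorem ascension_time_density
    (ψ : ℝ → ℝ) (hψ : ContDiff ℝ 1 ψ)
    (hconv : StrictConvexOn ℝ Set.univ ψ)
    (hψ0 : ψ 0 = 0) (hd0 : deriv ψ 0 = 0)
    (lam η : ℝ) (hlam : 0 < lam) (hη : 0 < η) (hψη : ψ η = lam)
    (bar : ℝ → ℝ) (hbar : ∀ r : ℝ, 0 ≤ bar r ∧ ψ (bar r) = ψ r)
    (θlam : ℝ) (hθlam : θlam < 0) (hθlam2 : bar θlam - θlam = η)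
    (f : ℝ → ℝ)
    (hf : ∀ r : ℝ, f r = (1 / η) * (1 - deriv ψ r / deriv ψ (bar r))) :
    (∀ r ∈ Set.Ioo θlam 0, 0 ≤ f r) ∧ ∫ r in θlam..0, f r = 1 := by
  have hdiff : Differentiable ℝ ψ := hψ.differentiable one_ne_zero
  have hmono : StrictMono (deriv ψ) := by
    intro x y hxy
    calc deriv ψ x < slope ψ x y :=
          hconv.deriv_lt_slope (mem_univ x) (mem_univ y) hxy (hdiff x)
      _ < deriv ψ y := hconv.slope_lt_deriv (mem_univ x) (mem_univ y) hxy (hdiff y)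
  have hderiv_neg : ∀ r : ℝ, r < 0 → deriv ψ r < 0 := fun r hr => hd0 ▸ hmono hr
  have hderiv_pos : ∀ r : ℝ, 0 < r → 0 < deriv ψ r := fun r hr => hd0 ▸ hmono hr
  have hmono0 : StrictMonoOn ψ (Ici 0) := by
    apply strictMonoOn_of_deriv_pos (convex_Ici 0) hψ.continuous.continuousOn
    intro x hx
    rw [interior_Ici] at hx
    exact hderiv_pos x hx
  have hanti0 : StrictAntiOn ψ (Iic 0) := by
    apply strictAntiOn_of_deriv_neg (convex_Iic 0) hψ.continuous.continuousOn
    intro x hx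
    rw [interior_Iic] at hx
    exact hderiv_neg x hx
  have hψpos : ∀ r : ℝ, r < 0 → 0 < ψ r := by
    intro r hr
    have := hanti0 (le_of_lt hr : r ∈ Iic 0) self_mem_Iic hr
    rwa [hψ0] at this
  have hbar0 : bar 0 = 0 := by
    rcases (Or.imp Eq.symm id (hbar 0).1.eq_or_lt) with h | h
    · exact h
    · exfalso
      have := hmono0 (self_mem_Ici) (le_of_lt h : bar 0 ∈ Ici 0) h
      rw [(hbar 0).2] at this
      exact lt_irrefl _ this
  have hbarpos : ∀ r : ℝ, r < 0 → 0 < bar r := by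
    intro r hr
    rcases (Or.imp Eq.symm id (hbar r).1.eq_or_lt) with h | h
    · exfalso
      have := (hbar r).2
      rw [h, hψ0] at this
      exact (hψpos r hr).ne this
    · exact h
  -- the derivative of `bar` at every negative point
  have key : ∀ a : ℝ, a < 0 → HasDerivAt bar (deriv ψ a / deriv ψ (bar a)) a := by
    intro a ha
    have hbpos : 0 < bar a := hbarpos a ha
    have hb' : deriv ψ (bar a) ≠ 0 := (hderiv_pos _ hbpos).ne'
    have hstrict : HasStrictDerivAt ψ (deriv ψ (bar a)) (bar a) :=
      hψ.contDiffAt.hasStrictDerivAt one_ne_zero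
    set e := hstrict.hasStrictFDerivAt_equiv hb' with he
    set g : ℝ → ℝ := e.localInverse ψ _ (bar a) with hgdef
    have hginv : ∀ᶠ y in 𝓝 (ψ (bar a)), ψ (g y) = y := e.eventually_right_inverse
    have hgb : g (ψ (bar a)) = bar a := e.localInverse_apply_image
    have hgc : ContinuousAt g (ψ (bar a)) := e.localInverse_continuousAt
    have hgd : HasStrictFDerivAt g _ (ψ (bar a)) := e.to_localInverse
    have hψa : ψ a = ψ (bar a) := ((hbar a).2).symm
    have h1 : Tendsto ψ (𝓝 a) (𝓝 (ψ (bar a))) := by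
      rw [← hψa]; exact hψ.continuous.continuousAt
    have h2 : Tendsto (fun r => g (ψ r)) (𝓝 a) (𝓝 (bar a)) := by
      rw [← hgb]; exact (hgc.tendsto).comp h1
    have h3 : ∀ᶠ r in 𝓝 a, ψ (g (ψ r)) = ψ r := h1.eventually hginv
    have h4 : ∀ᶠ r in 𝓝 a, 0 < g (ψ r) := h2.eventually (eventually_gt_nhds hbpos)
    have hev : bar =ᶠ[𝓝 a] fun r => g (ψ r) := by
      filter_upwards [h3, h4] with r h3r h4r
      refine hmono0.injOn (hbar r).1 (le_of_lt h4r : g (ψ r) ∈ Ici 0) ?_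
      rw [(hbar r).2, h3r]
    have hgd' : HasDerivAt g (deriv ψ (bar a))⁻¹ (ψ a) := by
      rw [hψa]
      exact (HasStrictDerivAt.to_localInverse hstrict hb').hasDerivAt
    have hcomp : HasDerivAt (fun r => g (ψ r)) ((deriv ψ (bar a))⁻¹ * deriv ψ a) a :=
      HasDerivAt.comp a hgd' (hdiff a).hasDerivAt
    have : HasDerivAt bar ((deriv ψ (bar a))⁻¹ * deriv ψ a) a :=
      hcomp.congr_of_eventuallyEq hev
    simpa [div_eq_inv_mul] using this
  -- the antiderivative
  set F : ℝ → ℝ := fun r => 1 - (bar r - r) / η with hF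
  have hFd : ∀ r ∈ Ioo θlam 0, HasDerivAt F (f r) r := by
    intro r hr
    have hd : HasDerivAt (fun r => 1 - (bar r - r) / η)
        (0 - (deriv ψ r / deriv ψ (bar r) - 1) / η) r :=
      (hasDerivAt_const r (1 : ℝ)).sub (((key r hr.2).sub (hasDerivAt_id r)).div_const η)
    have : f r = 0 - (deriv ψ r / deriv ψ (bar r) - 1) / η := by
      rw [hf r]; field_simp; ring
    rw [this]
    exact hd
  -- continuity of `bar` and `F` on the closed interval
  have hbarcont : ContinuousOn bar (Icc θlam 0) := by
    intro r hr
    rcases lt_or_eq_of_le hr.2 with h | h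
    · exact ((key r h).continuousAt).continuousWithinAt
    · subst h
      unfold ContinuousWithinAt
      rw [hbar0]
      refine tendsto_order.2 ⟨fun c hc => ?_, fun c hc => ?_⟩
      · exact Eventually.of_forall fun x => lt_of_lt_of_le hc (hbar x).1
      · -- eventually bar x < c, for c > 0
        have hψc : 0 < ψ c := by
          have := hmono0 self_mem_Ici (le_of_lt hc : c ∈ Ici 0) hc
          rwa [hψ0] at this
        have h1 : Tendsto ψ (𝓝[Icc θlam 0] 0) (𝓝 0) := by
          have := (hψ.continuous.tendsto 0)
          rw [hψ0] at this
          exact this.mono_left nhdsWithin_le_nhds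
        have h2 : ∀ᶠ x in 𝓝[Icc θlam 0] 0, ψ x < ψ c := h1.eventually (gt_mem_nhds hψc)
        filter_upwards [h2] with x hx
        by_contra hcon
        push_neg at hcon
        have := hmono0.monotoneOn (le_of_lt hc : c ∈ Ici 0)
          ((hbar x).1 : bar x ∈ Ici 0) hcon
        rw [(hbar x).2] at this
        exact absurd (lt_of_le_of_lt this hx) (lt_irrefl _)
  have hFcont : ContinuousOn F (Icc θlam 0) :=
    continuousOn_const.sub ((hbarcont.sub continuousOn_id).div_const η)
  -- nonnegativity
  have hfpos : ∀ r ∈ Ioo θlam 0, 0 ≤ f r := by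
    intro r hr
    rw [hf r]
    have h1 : deriv ψ r / deriv ψ (bar r) ≤ 0 :=
      div_nonpos_of_nonpos_of_nonneg (hderiv_neg r hr.2).le (hderiv_pos _ (hbarpos r hr.2)).le
    have h2 : (0:ℝ) ≤ 1 / η := by positivity
    nlinarith
  refine ⟨hfpos, ?_⟩
  have hint : IntegrableOn f (Ioc θlam 0) :=
    intervalIntegral.integrableOn_deriv_of_nonneg hFcont hFd hfpos
  have hii : IntervalIntegrable f volume θlam 0 :=
    (intervalIntegrable_iff_integrableOn_Ioc_of_le hθlam.le).2 hint
  have := intervalIntegral.integral_eq_sub_of_hasDeriv_right_of_le hθlam.le hFcont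
    (fun x hx => (hFd x hx).hasDerivWithinAt) hii
  rw [this, hF]
  simp only [hbar0, hθlam2]
  field_simp
  ring
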